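/- For every even n ≥ 2 there exists a 1-cross intersecting set pair system {(A_i, B_i)}_{i=1}^m with |A_i| ≤ n and |B_i| ≤ n for all i and m ≥ 5^{n/2}. -/

import Mathlib

open Finset

private def a5 : Fin 5 → Finset (Fin 5) := fun i => {i, i+1}
private def b5 : Fin 5 → Finset (Fin 5) := fun i => {i+2, i+4}

private lemma ab_self : ∀ i, a5 i ∩ b5 i = ∅ := by decide
private lemma ab_card : ∀ i j : Fin 5, i ≠ j → (a5 i ∩ b5 j).card = 1 := by decide
private lemma a5_card : ∀ i, (a5 i).card ≤ 2 := by decide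
private lemma b5_card : ∀ i, (b5 i).card ≤ 2 := by decide

private def pref (f : ℕ → Fin 5) : ℕ → ℕ
  | 0 => 0
  | t+1 => Nat.pair (pref f t) (f t)

private def enc (f : ℕ → Fin 5) (t : ℕ) (v : Fin 5) : ℕ :=
  Nat.pair t (Nat.pair (pref f t) v)

private lemma enc_eq {f g : ℕ → Fin 5} {t t' : ℕ} {v w : Fin 5}
    (h : enc f t v = enc g t' w) : t = t' ∧ pref f t = pref g t' ∧ v = w := by
  unfold enc at h
  have h1 := (Nat.pair_eq_pair.mp h).1
  have h2 := Nat.pair_eq_pair.mp (Nat.pair_eq_pair.mp h).2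
  exact ⟨h1, h2.1, Fin.val_injective h2.2⟩

private lemma enc_inj (f : ℕ → Fin 5) (t : ℕ) : Function.Injective (enc f t) :=
  fun v w h => (enc_eq h).2.2

private lemma pref_congr {f g : ℕ → Fin 5} {t : ℕ} (h : ∀ s < t, f s = g s) :
    pref f t = pref g t := by
  induction t with
  | zero => rfl
  | succ t ih =>
    simp only [pref]
    rw [ih (fun s hs => h s (hs.trans (Nat.lt_succ_self t))), h t (Nat.lt_succ_self t)]

private lemma pref_agree {f g : ℕ → Fin 5} {t : ℕ} (h : pref f t = pref g t) :
    ∀ s < t, f s = g s := by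
  induction t with
  | zero => intro s hs; omega
  | succ t ih =>
    simp only [pref] at h
    have h' := Nat.pair_eq_pair.mp h
    intro s hs
    rcases Nat.lt_succ_iff_lt_or_eq.mp hs with hs | hs
    · exact ih h'.1 s hs
    · subst hs; exact Fin.val_injective h'.2

private def AA (k : ℕ) (f : ℕ → Fin 5) : Finset ℕ :=
  (range k).biUnion (fun t => (a5 (f t)).image (enc f t))
private def BB (k : ℕ) (f : ℕ → Fin 5) : Finset ℕ :=
  (range k).biUnion (fun t => (b5 (f t)).image (enc f t))

private def piece (f g : ℕ → Fin 5) (t : ℕ) : Finset ℕ :=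
  ((a5 (f t)).image (enc f t)) ∩ ((b5 (g t)).image (enc g t))

private lemma inter_eq (k : ℕ) (f g : ℕ → Fin 5) :
    AA k f ∩ BB k g = (range k).biUnion (fun t => piece f g t) := by
  ext x
  simp only [AA, BB, piece, mem_inter, mem_biUnion, mem_image]
  constructor
  · rintro ⟨⟨t, ht, v, hv, rfl⟩, ⟨t', ht', w, hw, hx⟩⟩
    have := (enc_eq hx.symm).1
    subst this
    exact ⟨t, ht, ⟨⟨v, hv, rfl⟩, ⟨w, hw, hx⟩⟩⟩
  · rintro ⟨t, ht, ⟨v, hv, rfl⟩, ⟨w, hw, hx⟩⟩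
    exact ⟨⟨t, ht, v, hv, rfl⟩, ⟨t, ht, w, hw, hx⟩⟩

private lemma piece_card (f g : ℕ → Fin 5) (t : ℕ) :
    (piece f g t).card = if pref f t = pref g t then (a5 (f t) ∩ b5 (g t)).card else 0 := by
  split_ifs with h
  · have hfun : enc g t = enc f t := by
      funext v; unfold enc; rw [h]
    rw [piece, hfun, ← Finset.image_inter _ _ (enc_inj f t),
      Finset.card_image_of_injective _ (enc_inj f t)]
  · rw [Finset.card_eq_zero, Finset.eq_empty_iff_forall_notMem]
    intro x hx
    simp only [piece, mem_inter, mem_image] at hx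
    obtain ⟨⟨v, _, rfl⟩, ⟨w, _, hw⟩⟩ := hx
    exact h (enc_eq hw.symm).2.1

private lemma piece_disj (f g : ℕ → Fin 5) :
    ∀ t ∈ range k, ∀ t' ∈ range k, t ≠ t' → Disjoint (piece f g t) (piece f g t') := by
  intro t _ t' _ hne
  rw [Finset.disjoint_left]
  intro x hx hx'
  simp only [piece, mem_inter, mem_image] at hx hx'
  obtain ⟨⟨v, _, rfl⟩, _⟩ := hx
  obtain ⟨⟨w, _, hw⟩, _⟩ := hx'
  exact hne (enc_eq hw.symm).1

private lemma inter_card (k : ℕ) (f g : ℕ → Fin 5) :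
    (AA k f ∩ BB k g).card = ∑ t ∈ range k, (piece f g t).card := by
  rw [inter_eq, Finset.card_biUnion]
  intro t ht t' ht' hne
  rw [Function.onFun, Finset.disjoint_left]
  intro x hx hx'
  simp only [piece, mem_inter, mem_image] at hx hx'
  obtain ⟨⟨v, _, rfl⟩, _⟩ := hx
  obtain ⟨⟨w, _, hw⟩, _⟩ := hx'
  exact hne (enc_eq hw.symm).1

private lemma self_inter (k : ℕ) (f : ℕ → Fin 5) : AA k f ∩ BB k f = ∅ := by
  rw [← Finset.card_eq_zero, inter_card]
  refine Finset.sum_eq_zero fun t _ => ?_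
  rw [piece_card, if_pos rfl, ab_self, Finset.card_empty]

private lemma cross_inter {k : ℕ} {f g : ℕ → Fin 5} {s : ℕ} (hs : s < k)
    (hne : f s ≠ g s) : (AA k f ∩ BB k g).card = 1 := by
  have hex : ∃ s, f s ≠ g s := ⟨s, hne⟩
  set d := Nat.find hex with hdd
  have hd : f d ≠ g d := Nat.find_spec hex
  have hdk : d < k := lt_of_le_of_lt (Nat.find_min' hex hne) hs
  rw [inter_card, Finset.sum_eq_single d]
  · rw [piece_card, if_pos (pref_congr fun u hu => not_not.mp (Nat.find_min hex hu)),
      ab_card _ _ hd]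
  · intro t _ htd
    rw [piece_card]
    rcases lt_or_gt_of_ne htd with h | h
    · rw [if_pos (pref_congr fun u hu => not_not.mp (Nat.find_min hex (hu.trans h)))]
      have hft : f t = g t := not_not.mp (Nat.find_min hex h)
      rw [hft, ab_self, Finset.card_empty]
    · rw [if_neg]
      intro hp
      exact hd (pref_agree hp d h)
  · intro hdm
    exact absurd (mem_range.mpr hdk) hdm

private lemma AA_card (k : ℕ) (f : ℕ → Fin 5) : (AA k f).card ≤ 2 * k := by
  refine le_trans (Finset.card_biUnion_le) ?_
  calc ∑ t ∈ range k, ((a5 (f t)).image (enc f t)).card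
      ≤ ∑ _t ∈ range k, 2 := by
        refine Finset.sum_le_sum fun t _ => le_trans (Finset.card_image_le) (a5_card _)
    _ = 2 * k := by rw [Finset.sum_const, Finset.card_range]; ring

private lemma BB_card (k : ℕ) (f : ℕ → Fin 5) : (BB k f).card ≤ 2 * k := by
  refine le_trans (Finset.card_biUnion_le) ?_
  calc ∑ t ∈ range k, ((b5 (f t)).image (enc f t)).card
      ≤ ∑ _t ∈ range k, 2 := by
        refine Finset.sum_le_sum fun t _ => le_trans (Finset.card_image_le) (b5_card _)
    _ = 2 * k := by rw [Finset.sum_const, Finset.card_range]; ring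

private def ext5 (k : ℕ) (g : Fin k → Fin 5) : ℕ → Fin 5 :=
  fun s => if h : s < k then g ⟨s, h⟩ else 0

theorem stmt_10 (n : ℕ) (hn : 2 ≤ n) (heven : Even n) :
    ∃ (m : ℕ) (A B : Fin m → Finset ℕ),
      (∀ i, A i ∩ B i = ∅) ∧
      (∀ i j, i ≠ j → ((A i ∩ B j).card = 1)) ∧
      (∀ i, (A i).card ≤ n) ∧ (∀ i, (B i).card ≤ n) ∧
      5 ^ (n / 2) ≤ m := by
  set k := n / 2 with hk
  have h2k : 2 * k = n := Nat.two_mul_div_two_of_even heven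
  set e : (Fin k → Fin 5) ≃ Fin (5 ^ k) := finFunctionFinEquiv
  refine ⟨5 ^ k, fun i => AA k (ext5 k (e.symm i)), fun i => BB k (ext5 k (e.symm i)),
    fun i => self_inter k _, ?_, fun i => h2k ▸ AA_card k _, fun i => h2k ▸ BB_card k _,
    le_refl _⟩
  intro i j hij
  have hne : e.symm i ≠ e.symm j := fun h => hij (e.symm.injective h)
  obtain ⟨s, hs⟩ := Function.ne_iff.mp hne
  refine cross_inter (s := (s : ℕ)) s.isLt ?_
  simp only [ext5, dif_pos s.isLt]
  exact fun h => hs (by simpa [Fin.eta] using h)
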